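/- Let u₁, u₂ be the two roots of λ³ - λ² - t = 0 that converge to 0 as t → 0 (t ≠ 0). Then (1-4u₁)³/(u₁²(2-3u₁)) + (1-4u₂)³/(u₂²(2-3u₂)) + 1/t converges as t → 0; more precisely, writing the sum as a symmetric rational function in u₁, u₂ and using u₁ + u₂ = 1 - u₃, u₁u₂ = t/u₃ with u₃ → 1, the singular parts cancel. -/

import Mathlib

open Filter Topology

lemma key (a b : ℂ) (ha : a ≠ 0) (hb : b ≠ 0)
    (h2a : (2:ℂ) - 3*a ≠ 0) (h2b : (2:ℂ) - 3*b ≠ 0)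
    (hs1 : (1:ℂ) - a - b ≠ 0) (hs3 : (1:ℂ) - 3*(a+b) ≠ 0)
    (he2 : a*b + a*(1-a-b) + b*(1-a-b) = 0) :
    (1-4*a)^3/(a^2*(2-3*a)) + (1-4*b)^3/(b^2*(2-3*b)) + 1/(a*b*(1-a-b)) =
      (37 - 212*(a+b) + 304*(a+b)^2 - 128*(a+b)^3) / ((1-(a+b))^2 * (1-3*(a+b))) := by
  have h1s : (1:ℂ) - (a+b) ≠ 0 := by rwa [show (1:ℂ)-(a+b) = 1-a-b by ring]
  have hQ : a^2*(2-3*a) * (b^2*(2-3*b)) * (a*b*(1-a-b)) ≠ 0 := by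
    apply mul_ne_zero (mul_ne_zero (mul_ne_zero (pow_ne_zero 2 ha) h2a)
      (mul_ne_zero (pow_ne_zero 2 hb) h2b))
    exact mul_ne_zero (mul_ne_zero ha hb) hs1
  rw [div_add_div _ _ (mul_ne_zero (pow_ne_zero 2 ha) h2a) (mul_ne_zero (pow_ne_zero 2 hb) h2b), div_add_div _ _ (mul_ne_zero (mul_ne_zero (pow_ne_zero 2 ha) h2a) (mul_ne_zero (pow_ne_zero 2 hb) h2b)) (mul_ne_zero (mul_ne_zero ha hb) hs1), div_eq_div_iff hQ (mul_ne_zero (pow_ne_zero 2 h1s) hs3)]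
  linear_combination ((2:ℂ)*a^1*b^2 + (-13:ℂ)*a^1*b^3 + (29:ℂ)*a^1*b^4 + (-27:ℂ)*a^1*b^5 + (9:ℂ)*a^1*b^6 + (2:ℂ)*a^2*b^1 + (-45:ℂ)*a^2*b^2 + (217:ℂ)*a^2*b^3 + (-417:ℂ)*a^2*b^4 + (351:ℂ)*a^2*b^5 + (-108:ℂ)*a^2*b^6 + (-13:ℂ)*a^3*b^1 + (217:ℂ)*a^3*b^2 + (-729:ℂ)*a^3*b^3 + (945:ℂ)*a^3*b^4 + (-468:ℂ)*a^3*b^5 + (48:ℂ)*a^3*b^6 + (29:ℂ)*a^4*b^1 + (-417:ℂ)*a^4*b^2 + (945:ℂ)*a^4*b^3 + (-720:ℂ)*a^4*b^4 + (144:ℂ)*a^4*b^5 + (-27:ℂ)*a^5*b^1 + (351:ℂ)*a^5*b^2 + (-468:ℂ)*a^5*b^3 + (144:ℂ)*a^5*b^4 + (9:ℂ)*a^6*b^1 + (-108:ℂ)*a^6*b^2 + (48:ℂ)*a^6*b^3) * he2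

theorem stmt_11 (u₁ u₂ u₃ : ℝ → ℂ)
    (hroots : ∀ t : ℝ, t ≠ 0 → ∀ z : ℂ,
      z ^ 3 - z ^ 2 - (t : ℂ) = (z - u₁ t) * (z - u₂ t) * (z - u₃ t))
    (hlim₁ : Tendsto u₁ (𝓝[≠] (0 : ℝ)) (𝓝 0))
    (hlim₂ : Tendsto u₂ (𝓝[≠] (0 : ℝ)) (𝓝 0))
    (hlim₃ : Tendsto u₃ (𝓝[≠] (0 : ℝ)) (𝓝 1)) :
    (∀ t : ℝ, t ≠ 0 → u₁ t * u₂ t = (t : ℂ) / u₃ t ∧ u₁ t + u₂ t = 1 - u₃ t) ∧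
      Tendsto (fun t : ℝ =>
          (1 - 4 * u₁ t) ^ 3 / ((u₁ t) ^ 2 * (2 - 3 * u₁ t))
            + (1 - 4 * u₂ t) ^ 3 / ((u₂ t) ^ 2 * (2 - 3 * u₂ t)) + 1 / (t : ℂ))
        (𝓝[≠] (0 : ℝ)) (𝓝 37) := by
  have he1 : ∀ t : ℝ, t ≠ 0 → u₁ t + u₂ t + u₃ t = 1 := by
    intro t ht
    have h0 := hroots t ht 0; have h1 := hroots t ht 1; have hm := hroots t ht (-1)
    linear_combination (h1 + hm)/2 - h0
  have he2 : ∀ t : ℝ, t ≠ 0 → u₁ t * u₂ t + u₁ t * u₃ t + u₂ t * u₃ t = 0 := by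
    intro t ht
    have h1 := hroots t ht 1; have hm := hroots t ht (-1)
    linear_combination (hm - h1)/2
  have he3 : ∀ t : ℝ, t ≠ 0 → u₁ t * u₂ t * u₃ t = (t : ℂ) := by
    intro t ht
    have h0 := hroots t ht 0
    linear_combination h0
  have htC : ∀ t : ℝ, t ≠ 0 → ((t : ℂ) ≠ 0) := by
    intro t ht; exact_mod_cast Complex.ofReal_ne_zero.mpr ht
  have hne : ∀ t : ℝ, t ≠ 0 → u₁ t ≠ 0 ∧ u₂ t ≠ 0 ∧ u₃ t ≠ 0 := by
    intro t ht
    have h3 := he3 t ht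
    have htc := htC t ht
    refine ⟨fun h => htc ?_, fun h => htc ?_, fun h => htc ?_⟩ <;>
      [skip; skip; skip] <;> rw [← h3] <;> simp [h]
  constructor
  · intro t ht
    obtain ⟨h1, h2, h3⟩ := hne t ht
    constructor
    · rw [eq_div_iff h3]; exact he3 t ht
    · linear_combination he1 t ht
  · -- the limit
    set G : ℂ → ℂ := fun z => (37 - 212*z + 304*z^2 - 128*z^3) / ((1-z)^2 * (1-3*z)) with hG
    have hs : Tendsto (fun t => u₁ t + u₂ t) (𝓝[≠] (0:ℝ)) (𝓝 0) := by
      simpa using hlim₁.add hlim₂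
    have hGc : ContinuousAt G 0 := by
      apply ContinuousAt.div
      · fun_prop
      · fun_prop
      · norm_num
    have hcomp : Tendsto (fun t => G (u₁ t + u₂ t)) (𝓝[≠] (0:ℝ)) (𝓝 37) := by
      have := hGc.tendsto.comp hs
      rw [show G 0 = 37 by norm_num [hG]] at this; exact this
    refine hcomp.congr' ?_
    have ev1 : ∀ᶠ t in 𝓝[≠] (0:ℝ), ‖u₁ t‖ < 1/8 := by
      have := hlim₁ (Metric.ball_mem_nhds (0:ℂ) (by norm_num : (0:ℝ) < 1/8))
      filter_upwards [this] with t h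
      simpa [Metric.mem_ball, dist_zero_right] using h
    have ev2 : ∀ᶠ t in 𝓝[≠] (0:ℝ), ‖u₂ t‖ < 1/8 := by
      have := hlim₂ (Metric.ball_mem_nhds (0:ℂ) (by norm_num : (0:ℝ) < 1/8))
      filter_upwards [this] with t h
      simpa [Metric.mem_ball, dist_zero_right] using h
    filter_upwards [ev1, ev2, eventually_mem_nhdsWithin] with t hn1 hn2 htm
    have ht : t ≠ 0 := htm
    obtain ⟨ha, hb, h3⟩ := hne t ht
    set a := u₁ t; set b := u₂ t
    have hc : u₃ t = 1 - a - b := by linear_combination he1 t ht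
    have h2a : (2:ℂ) - 3*a ≠ 0 := by
      intro h
      have h2 : (2:ℂ) = 3*a := by linear_combination h
      have : ‖(2:ℂ)‖ = ‖(3:ℂ)‖ * ‖a‖ := by rw [h2, norm_mul]
      simp only [Complex.norm_ofNat] at this
      nlinarith
    have h2b : (2:ℂ) - 3*b ≠ 0 := by
      intro h
      have h2 : (2:ℂ) = 3*b := by linear_combination h
      have : ‖(2:ℂ)‖ = ‖(3:ℂ)‖ * ‖b‖ := by rw [h2, norm_mul]
      simp only [Complex.norm_ofNat] at this
      nlinarith
    have hs1 : (1:ℂ) - a - b ≠ 0 := by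
      intro h
      have h2 : (1:ℂ) = a + b := by linear_combination h
      have : ‖(1:ℂ)‖ ≤ ‖a‖ + ‖b‖ := by rw [h2]; exact norm_add_le a b
      rw [norm_one] at this
      nlinarith
    have hs3 : (1:ℂ) - 3*(a+b) ≠ 0 := by
      intro h
      have h2 : (1:ℂ) = 3*(a+b) := by linear_combination h
      have : ‖(1:ℂ)‖ ≤ ‖(3:ℂ)‖ * (‖a‖ + ‖b‖) := by
        rw [h2, norm_mul]
        exact mul_le_mul_of_nonneg_left (norm_add_le a b) (norm_nonneg _)
      simp only [norm_one, Complex.norm_ofNat] at this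
      nlinarith
    have he2' : a*b + a*(1-a-b) + b*(1-a-b) = 0 := by
      linear_combination he2 t ht - (a + b) * hc
    have htt : (t : ℂ) = a * b * (1 - a - b) := by
      linear_combination -he3 t ht + a * b * hc
    have := key a b ha hb h2a h2b hs1 hs3 he2'
    rw [htt]
    exact this.symm
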